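/- Let 0 < s < 1 and let ρ be a bounded compactly supported probability density. Let H = T + λω be an Anderson Hamiltonian on ℓ²(V) over a graph with uniformly bounded vertex degree, where the (ω_v) are i.i.d. with density ρ and λ > 0. Then for every vertex x and every z ∈ ℂ \ ℝ, the conditional expectation over ω_x of |⟨δ_x, (H - z)⁻¹ δ_x⟩|^s is at most C_1(s,ρ) λ^{-s}, where C_1(s,ρ) = ‖ρ‖_∞^s · 2^s s^{-s}/(1-s). -/

import Mathlib

open MeasureTheory Set
open scoped ComplexInnerProductSpace

/-- The canonical basis vector `δ_x` of `ℓ²(V)`. -/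
noncomputable def delta {V : Type*} [DecidableEq V] (x : V) : lp (fun _ : V => ℂ) 2 :=
  lp.single 2 x 1

lemma delta_inner {V : Type*} [DecidableEq V] (x : V) (f : lp (fun _ : V => ℂ) 2) :
    ⟪delta x, f⟫ = f x := by
  simp [delta, lp.inner_single_left]

lemma rankone_apply {V : Type*} [DecidableEq V] (x : V) (c : ℂ)
    (D : lp (fun _ : V => ℂ) 2 →L[ℂ] lp (fun _ : V => ℂ) 2)
    (hD : ∀ v w, ⟪delta v, D (delta w)⟫ = if v = x ∧ w = x then c else 0)
    (φ : lp (fun _ : V => ℂ) 2) :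
    D φ = (c * φ x) • delta x := by
  have h1 : HasSum (fun w => φ w • delta w) φ := by
    have h := lp.hasSum_single (E := fun _ : V => ℂ) ENNReal.ofNat_ne_top φ
    convert h using 2 with w
    rw [delta, ← lp.single_smul, smul_eq_mul, mul_one]
  have h2 : HasSum (fun w => φ w • D (delta w)) (D φ) := by
    have := h1.mapL D
    simpa using this
  have h3 : ∀ v : V, ⟪delta v, D φ⟫ = if v = x then c * φ x else 0 := by
    intro v
    have h4 := h2.mapL (innerSL ℂ (delta v))
    simp only [innerSL_apply_apply, inner_smul_right, hD] at h4
    refine h4.unique ?_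
    have h5 : HasSum (fun w : V => if w = x then (if v = x then c * φ x else 0) else 0)
        (if v = x then c * φ x else 0) := hasSum_ite_eq x _
    convert h5 using 2 with w
    case e'_3 => rfl
    by_cases hw : w = x <;> by_cases hv : v = x <;> simp [hw, hv, mul_comm]
  apply lp.ext
  funext v
  have hl : (D φ) v = ⟪delta v, D φ⟫ := (delta_inner v (D φ)).symm
  have hr : ((c * φ x) • delta x) v = ⟪delta v, (c * φ x) • delta x⟫ := (delta_inner v _).symm
  rw [hl, hr, h3 v, inner_smul_right, delta_inner]
  by_cases hv : v = x <;> simp [hv, delta, lp.single_apply_self, lp.single_apply_ne]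

lemma green_identity {V : Type*} [DecidableEq V]
    (lam : ℝ)
    (H : (V → ℝ) → lp (fun _ : V => ℂ) 2 →L[ℂ] lp (fun _ : V => ℂ) 2)
    (G : SimpleGraph V) [DecidableRel G.Adj]
    (hH : ∀ (ω : V → ℝ) (v w : V), ⟪delta v, H ω (delta w)⟫ =
      (if G.Adj v w then (-1 : ℂ) else 0) + (if v = w then (lam * ω v : ℂ) else 0))
    (Res : (V → ℝ) → ℂ → lp (fun _ : V => ℂ) 2 →L[ℂ] lp (fun _ : V => ℂ) 2)
    (hRes : ∀ (ω : V → ℝ) (z : ℂ), z.im ≠ 0 →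
      (H ω - z • 1) ∘L Res ω z = 1 ∧ Res ω z ∘L (H ω - z • 1) = 1)
    (ω : V → ℝ) (x : V) (z : ℂ) (hz : z.im ≠ 0) (u u' : ℝ) :
    ⟪delta x, Res (Function.update ω x u) z (delta x)⟫
      - ⟪delta x, Res (Function.update ω x u') z (delta x)⟫
    = (lam * (u' - u)) * (⟪delta x, Res (Function.update ω x u) z (delta x)⟫
        * ⟪delta x, Res (Function.update ω x u') z (delta x)⟫) := by
  set ω₁ := Function.update ω x u
  set ω₂ := Function.update ω x u'
  set R₁ := Res ω₁ z
  set R₂ := Res ω₂ z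
  set ψ := R₂ (delta x) with hψ
  set D : lp (fun _ : V => ℂ) 2 →L[ℂ] lp (fun _ : V => ℂ) 2 := H ω₂ - H ω₁ with hDdef
  have hD : ∀ v w, ⟪delta v, D (delta w)⟫ = if v = x ∧ w = x then (lam * (u' - u) : ℂ) else 0 := by
    intro v w
    have : ⟪delta v, D (delta w)⟫ = ⟪delta v, H ω₂ (delta w)⟫ - ⟪delta v, H ω₁ (delta w)⟫ := by
      simp [hDdef, inner_sub_right]
    rw [this, hH, hH]
    by_cases hvw : v = w
    · subst hvw
      by_cases hvx : v = x
      · subst hvx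
        simp [ω₁, ω₂, Function.update_self]
        push_cast
        ring
      · simp [hvx, ω₁, ω₂, Function.update_of_ne hvx]
    · have : ¬(v = x ∧ w = x) := by rintro ⟨rfl, rfl⟩; exact hvw rfl
      simp [hvw, this]
  have hDψ : D ψ = ((lam * (u' - u) : ℂ) * ψ x) • delta x := rankone_apply x _ D hD ψ
  have h1 : R₁ ∘L (H ω₁ - z • 1) = 1 := (hRes ω₁ z hz).2
  have h2 : (H ω₂ - z • 1) ∘L R₂ = 1 := (hRes ω₂ z hz).1
  have key : R₁ (delta x) - R₂ (delta x) = R₁ (D ψ) := by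
    have e1 : (H ω₂ - z • 1) ψ = delta x := by
      rw [hψ, ← ContinuousLinearMap.comp_apply, h2]; rfl
    have e2 : R₁ ((H ω₁ - z • 1) ψ) = ψ := by
      rw [← ContinuousLinearMap.comp_apply, h1]; rfl
    have e3 : D ψ = (H ω₂ - z • 1) ψ - (H ω₁ - z • 1) ψ := by
      simp [hDdef]
    rw [e3, map_sub, e1, e2, hψ]
  have hpsix : (ψ x : ℂ) = ⟪delta x, R₂ (delta x)⟫ := by
    rw [← delta_inner x ψ, hψ]
  calc ⟪delta x, R₁ (delta x)⟫ - ⟪delta x, R₂ (delta x)⟫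
      = ⟪delta x, R₁ (delta x) - R₂ (delta x)⟫ := by rw [inner_sub_right]
    _ = ⟪delta x, R₁ (D ψ)⟫ := by rw [key]
    _ = (lam * (u' - u)) * (⟪delta x, R₁ (delta x)⟫ * ⟪delta x, R₂ (delta x)⟫) := by
        rw [hDψ, ContinuousLinearMap.map_smul, inner_smul_right, hpsix]; ring

lemma abspow_intervalIntegrable (s t : ℝ) (hs0 : 0 < s) (hs1 : s < 1) (ht : 0 < t) :
    IntervalIntegrable (fun v : ℝ => |v| ^ (-s)) volume (-t) t := by
  have hbase : IntervalIntegrable (fun v : ℝ => |v| ^ (-s)) volume 0 t := by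
    have h := intervalIntegral.intervalIntegrable_rpow'  (show (-1:ℝ) < -s by linarith) (a := 0) (b := t)
    rw [intervalIntegrable_iff] at h ⊢
    refine h.congr_fun ?_ measurableSet_uIoc
    intro v hv
    rw [Set.uIoc_of_le ht.le] at hv
    simp [abs_of_pos hv.1]
  have hneg : IntervalIntegrable (fun v : ℝ => |v| ^ (-s)) volume (-t) 0 := by
    have := ((IntervalIntegrable.iff_comp_neg (by simp)).mp hbase)
    simpa using this.symm
  exact hneg.trans hbase

lemma abspow_integral (s t : ℝ) (hs0 : 0 < s) (hs1 : s < 1) (ht : 0 < t) :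
    ∫ v in (-t)..t, |v| ^ (-s) = 2 * t ^ (1 - s) / (1 - s) := by
  have h1s : (0:ℝ) < 1 - s := by linarith
  have hpos : ∫ v in (0:ℝ)..t, |v| ^ (-s) = t ^ (1 - s) / (1 - s) := by
    have hcongr : ∫ v in (0:ℝ)..t, |v| ^ (-s) = ∫ v in (0:ℝ)..t, v ^ (-s) := by
      refine intervalIntegral.integral_congr ?_
      intro v hv
      rw [Set.uIcc_of_le ht.le] at hv
      simp [abs_of_nonneg hv.1]
    rw [hcongr, integral_rpow (Or.inl (by linarith))]
    rw [Real.zero_rpow (by linarith : -s + 1 ≠ 0)]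
    norm_num
    rw [show -s + 1 = 1 - s by ring]
  have hneg : ∫ v in (-t)..(0:ℝ), |v| ^ (-s) = t ^ (1 - s) / (1 - s) := by
    have h2 : ∫ v in (-t)..(0:ℝ), |(-v)| ^ (-s) = ∫ v in (-(0:ℝ))..(-(-t)), |v| ^ (-s) :=
      intervalIntegral.integral_comp_neg (f := fun v => |v| ^ (-s))
    simp only [abs_neg, neg_zero, neg_neg] at h2
    rw [h2, hpos]
  have hint := abspow_intervalIntegrable s t hs0 hs1 ht
  have hi1 : IntervalIntegrable (fun v : ℝ => |v| ^ (-s)) volume (-t) 0 :=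
    hint.mono_set (by rw [Set.uIcc_subset_uIcc_iff_le]; constructor <;> simp [Set.mem_uIcc, ht.le, neg_nonpos.mpr ht.le])
  have hi2 : IntervalIntegrable (fun v : ℝ => |v| ^ (-s)) volume 0 t :=
    hint.mono_set (by rw [Set.uIcc_subset_uIcc_iff_le]; constructor <;> simp [Set.mem_uIcc, ht.le, neg_nonpos.mpr ht.le])
  rw [← intervalIntegral.integral_add_adjacent_intervals (b := (0:ℝ)) hi1 hi2, hpos, hneg]
  ring

lemma rho_integrable (ρ : ℝ → ℝ) (hρmeas : Measurable ρ) (hρ0 : ∀ u, 0 ≤ ρ u)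
    (K : ℝ) (hρsupp : ∀ u, K < |u| → ρ u = 0) (R : ℝ) (hR : ∀ u, ρ u ≤ R) :
    Integrable ρ := by
  have hρeq : ρ = (Icc (-K) K).indicator ρ := by
    funext u
    by_cases h : u ∈ Icc (-K) K
    · simp [Set.indicator_of_mem h]
    · rw [Set.indicator_of_notMem h]
      apply hρsupp
      simp only [mem_Icc, not_and_or, not_le] at h
      rw [lt_abs]
      rcases h with h | h
      · right; linarith
      · left; exact h
  rw [hρeq, integrable_indicator_iff measurableSet_Icc]
  refine Integrable.mono' (g := fun _ => R) (integrableOn_const measure_Icc_lt_top.ne)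
    hρmeas.aestronglyMeasurable ?_
  exact Filter.Eventually.of_forall fun u => by
    rw [Real.norm_eq_abs, abs_of_nonneg (hρ0 u)]; exact hR u

lemma green_integral_bound (ρ : ℝ → ℝ) (hρmeas : Measurable ρ) (hρ0 : ∀ u, 0 ≤ ρ u)
    (hρ1 : ∫ u, ρ u = 1) (K : ℝ) (hρsupp : ∀ u, K < |u| → ρ u = 0)
    (R : ℝ) (hR : ∀ u, ρ u ≤ R)
    (lam : ℝ) (hlam : 0 < lam) (s : ℝ) (hs0 : 0 < s) (hs1 : s < 1)
    (g : ℝ → ℂ) (c : ℂ) (hg : ∀ u : ℝ, g u = (((lam * u : ℝ) : ℂ) + c)⁻¹) :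
    ∫ u, ‖g u‖ ^ s * ρ u ≤ (R ^ s * (2 ^ s * s ^ (-s) / (1 - s))) * lam ^ (-s) := by
  have h1s : (0:ℝ) < 1 - s := by linarith
  have hR0 : 0 < R := by
    by_contra h
    push_neg at h
    have hz : ∀ u, ρ u = 0 := fun u => le_antisymm ((hR u).trans h) (hρ0 u)
    simp [hz] at hρ1
  set a : ℝ := c.re with ha
  set b : ℝ := -a / lam with hb
  set t : ℝ := s / (2 * R) with htdef
  have ht : 0 < t := by positivity
  have hρint : Integrable ρ := rho_integrable ρ hρmeas hρ0 K hρsupp R hR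
  -- the majorant
  set M : ℝ → ℝ := fun u =>
    lam ^ (-s) * ((Icc (b - t) (b + t)).indicator (fun v => R * |v - b| ^ (-s)) u
      + t ^ (-s) * ρ u) with hMdef
  have hM1int : Integrable ((Icc (b - t) (b + t)).indicator (fun v => R * |v - b| ^ (-s))) := by
    rw [integrable_indicator_iff measurableSet_Icc]
    rw [← intervalIntegrable_iff_integrableOn_Icc_of_le (by linarith)]
    have h0 := ((abspow_intervalIntegrable s t hs0 hs1 ht).comp_sub_right b).const_mul R
    simpa [sub_eq_add_neg, add_comm, mul_comm] using h0
  have hMint : Integrable M := ((hM1int.add (hρint.const_mul _)).const_mul _)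
  have hae : ∀ᵐ u : ℝ, ‖g u‖ ^ s * ρ u ≤ M u := by
    have hbae : ∀ᵐ u : ℝ, u ≠ b := by
      rw [ae_iff]
      have : {u : ℝ | ¬u ≠ b} = {b} := by ext u; simp
      rw [this]
      exact measure_singleton b
    filter_upwards [hbae] with u hub
    have hub' : (0:ℝ) < |u - b| := abs_pos.mpr (sub_ne_zero.mpr hub)
    have hpos' : 0 < lam * |u - b| := mul_pos hlam hub'
    have hre : ((((lam * u : ℝ) : ℂ) + c).re) = lam * (u - b) := by
      simp only [Complex.add_re, Complex.ofReal_re, ha]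
      rw [hb, ha]
      field_simp
      ring
    have hle : lam * |u - b| ≤ ‖(((lam * u : ℝ) : ℂ) + c)‖ := by
      have h := Complex.abs_re_le_norm (((lam * u : ℝ) : ℂ) + c)
      rw [hre, abs_mul, abs_of_pos hlam] at h
      exact h
    have hnorm : ‖g u‖ ≤ (lam * |u - b|)⁻¹ := by
      rw [hg u, norm_inv]
      exact inv_anti₀ hpos' hle
    have hps : ‖g u‖ ^ s ≤ lam ^ (-s) * |u - b| ^ (-s) := by
      calc ‖g u‖ ^ s ≤ ((lam * |u - b|)⁻¹) ^ s :=
            Real.rpow_le_rpow (norm_nonneg _) hnorm hs0.le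
        _ = (lam * |u - b|) ^ (-s) := by
            rw [Real.inv_rpow hpos'.le, ← Real.rpow_neg hpos'.le]
        _ = lam ^ (-s) * |u - b| ^ (-s) := Real.mul_rpow hlam.le (abs_nonneg _)
    have hstep : ‖g u‖ ^ s * ρ u ≤ lam ^ (-s) * |u - b| ^ (-s) * ρ u :=
      mul_le_mul_of_nonneg_right hps (hρ0 u)
    refine hstep.trans ?_
    by_cases hcase : |u - b| ≤ t
    · have hmem : u ∈ Icc (b - t) (b + t) := by
        rw [abs_sub_le_iff] at hcase
        constructor <;> [linarith [hcase.2]; linarith [hcase.1]]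
      have h1 : |u - b| ^ (-s) * ρ u ≤ R * |u - b| ^ (-s) := by
        have := mul_le_mul_of_nonneg_left (hR u) (Real.rpow_nonneg (abs_nonneg (u - b)) (-s))
        linarith
      have h2 : (0:ℝ) ≤ t ^ (-s) * ρ u :=
        mul_nonneg (Real.rpow_nonneg ht.le _) (hρ0 u)
      calc lam ^ (-s) * |u - b| ^ (-s) * ρ u
          = lam ^ (-s) * (|u - b| ^ (-s) * ρ u) := by ring
        _ ≤ lam ^ (-s) * (R * |u - b| ^ (-s) + t ^ (-s) * ρ u) := by
            apply mul_le_mul_of_nonneg_left _ (Real.rpow_nonneg hlam.le _)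
            linarith
        _ = M u := by rw [hMdef]; simp only [Set.indicator_of_mem hmem]
    · push_neg at hcase
      have hnot : u ∉ Icc (b - t) (b + t) := by
        intro hmem
        rw [mem_Icc] at hmem
        exact absurd (abs_le.mpr ⟨by linarith [hmem.1], by linarith [hmem.2]⟩)
          (not_le.mpr hcase)
      have hmono : |u - b| ^ (-s) ≤ t ^ (-s) :=
        Real.rpow_le_rpow_of_nonpos ht hcase.le (neg_nonpos.mpr hs0.le)
      calc lam ^ (-s) * |u - b| ^ (-s) * ρ u
          = lam ^ (-s) * (|u - b| ^ (-s) * ρ u) := by ring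
        _ ≤ lam ^ (-s) * (0 + t ^ (-s) * ρ u) := by
            apply mul_le_mul_of_nonneg_left _ (Real.rpow_nonneg hlam.le _)
            have := mul_le_mul_of_nonneg_right hmono (hρ0 u)
            linarith
        _ = M u := by rw [hMdef]; simp only [Set.indicator_of_notMem hnot]
  have hnn : 0 ≤ᵐ[volume] fun u => ‖g u‖ ^ s * ρ u :=
    Filter.Eventually.of_forall fun u =>
      mul_nonneg (Real.rpow_nonneg (norm_nonneg _) _) (hρ0 u)
  have hmain := integral_mono_of_nonneg hnn hMint hae
  refine hmain.trans_eq ?_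
  have hIM : ∫ u, M u = lam ^ (-s) * (R * (2 * t ^ (1 - s) / (1 - s)) + t ^ (-s) * 1) := by
    simp only [hMdef]
    rw [integral_const_mul]
    rw [integral_add hM1int (hρint.const_mul _)]
    rw [integral_indicator measurableSet_Icc]
    rw [integral_const_mul, integral_const_mul, hρ1]
    congr 2
    have hset : ∫ u in Icc (b - t) (b + t), |u - b| ^ (-s)
        = ∫ u in (b - t)..(b + t), |u - b| ^ (-s) := by
      rw [intervalIntegral.integral_of_le (by linarith), ← integral_Icc_eq_integral_Ioc]
    rw [hset]
    have hshift : ∫ u in (b - t)..(b + t), |u - b| ^ (-s) = ∫ v in (-t)..t, |v| ^ (-s) := by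
      have h := intervalIntegral.integral_comp_sub_right (a := b - t) (b := b + t)
        (f := fun v => |v| ^ (-s)) b
      simpa using h
    rw [hshift, abspow_integral s t hs0 hs1 ht]
  rw [hIM]
  -- arithmetic
  have h2R : (0:ℝ) < 2 * R := by linarith
  have ht1 : t ^ (1 - s) = t * t ^ (-s) := by
    rw [show (1:ℝ) - s = 1 + -s by ring, Real.rpow_add ht, Real.rpow_one]
  have hss : (0:ℝ) < s ^ s := Real.rpow_pos_of_pos hs0 _
  have h2s : (0:ℝ) < 2 ^ s := Real.rpow_pos_of_pos two_pos _
  have hRs : (0:ℝ) < R ^ s := Real.rpow_pos_of_pos hR0 _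
  have ht2 : t ^ (-s) = 2 ^ s * R ^ s * (s ^ s)⁻¹ := by
    rw [htdef, Real.div_rpow hs0.le h2R.le, Real.rpow_neg hs0.le, Real.rpow_neg h2R.le,
      Real.mul_rpow (by norm_num : (0:ℝ) ≤ 2) hR0.le]
    field_simp
  rw [ht1, ht2, htdef, Real.rpow_neg hs0.le]
  field_simp
  ring

/-- A priori bound on the diagonal Green's function of the Anderson Hamiltonian
`H = T + λω` on `ℓ²(V)` over a graph of uniformly bounded degree: averaging over the
potential `ω_x` at the site `x` alone (all other potentials fixed),
`𝔼_x(|⟨δ_x, (H-z)⁻¹ δ_x⟩|^s) ≤ C₁(s,ρ) λ^{-s}` with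
`C₁(s,ρ) = ‖ρ‖_∞^s 2^s s^{-s}/(1-s)`, uniformly in `z ∈ ℂ \\ ℝ`, in `x` and in the
remaining potentials. -/
theorem apriori_diagonal_bound {V : Type*} [DecidableEq V]
    (G : SimpleGraph V) [G.LocallyFinite] [DecidableRel G.Adj] (N : ℕ) (hdeg : ∀ v, G.degree v ≤ N)
    (ρ : ℝ → ℝ) (hρmeas : Measurable ρ) (hρ0 : ∀ u, 0 ≤ ρ u) (hρ1 : ∫ u, ρ u = 1)
    (K : ℝ) (hρsupp : ∀ u, K < |u| → ρ u = 0)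
    (R : ℝ) (hR : ∀ u, ρ u ≤ R)
    (lam : ℝ) (hlam : 0 < lam) (s : ℝ) (hs0 : 0 < s) (hs1 : s < 1)
    (H : (V → ℝ) → lp (fun _ : V => ℂ) 2 →L[ℂ] lp (fun _ : V => ℂ) 2)
    (hH : ∀ (ω : V → ℝ) (v w : V), ⟪delta v, H ω (delta w)⟫ =
      (if G.Adj v w then (-1 : ℂ) else 0) + (if v = w then (lam * ω v : ℂ) else 0))
    (Res : (V → ℝ) → ℂ → lp (fun _ : V => ℂ) 2 →L[ℂ] lp (fun _ : V => ℂ) 2)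
    (hRes : ∀ (ω : V → ℝ) (z : ℂ), z.im ≠ 0 →
      (H ω - z • 1) ∘L Res ω z = 1 ∧ Res ω z ∘L (H ω - z • 1) = 1)
    (ω : V → ℝ) (x : V) (z : ℂ) (hz : z.im ≠ 0) :
    ∫ u, ‖⟪delta x, Res (Function.update ω x u) z (delta x)⟫‖ ^ s * ρ u
      ≤ (R ^ s * (2 ^ s * s ^ (-s) / (1 - s))) * lam ^ (-s) := by
  have h1s : (0:ℝ) < 1 - s := by linarith
  set g : ℝ → ℂ := fun u => ⟪delta x, Res (Function.update ω x u) z (delta x)⟫ with hgdef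
  show ∫ u, ‖g u‖ ^ s * ρ u ≤ (R ^ s * (2 ^ s * s ^ (-s) / (1 - s))) * lam ^ (-s)
  have hkey : ∀ u u' : ℝ, g u - g u' = (lam * (u' - u)) * (g u * g u') := fun u u' =>
    green_identity lam H G hH Res hRes ω x z hz u u'
  by_cases hex : ∃ u₀ : ℝ, g u₀ = 0
  · obtain ⟨u₀, h0⟩ := hex
    have hall : ∀ u, g u = 0 := by
      intro u
      have h := hkey u u₀
      rw [h0] at h
      simpa using h
    have hzero : ∀ u, ‖g u‖ ^ s * ρ u = 0 := fun u => by
      rw [hall u]; simp [Real.zero_rpow hs0.ne']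
    simp only [hzero, integral_zero]
    have hRnn : (0:ℝ) ≤ R := (hρ0 0).trans (hR 0)
    have h2s : (0:ℝ) ≤ 2 ^ s := (Real.rpow_pos_of_pos two_pos _).le
    have hss : (0:ℝ) ≤ s ^ (-s) := (Real.rpow_pos_of_pos hs0 _).le
    exact mul_nonneg (mul_nonneg (Real.rpow_nonneg hRnn _)
      (div_nonneg (mul_nonneg h2s hss) h1s.le)) (Real.rpow_nonneg hlam.le _)
  · push_neg at hex
    have h0 : g 0 ≠ 0 := hex 0
    have hinv : ∀ u : ℝ, g u = (((lam * u : ℝ) : ℂ) + (g 0)⁻¹)⁻¹ := by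
      intro u
      have h := hkey u 0
      have hu : g u ≠ 0 := hex u
      have hmul : (((lam * u : ℝ) : ℂ) + (g 0)⁻¹) * g u = 1 := by
        push_cast at h ⊢
        field_simp
        linear_combination h
      exact (inv_eq_of_mul_eq_one_right hmul).symm
    exact green_integral_bound ρ hρmeas hρ0 hρ1 K hρsupp R hR lam hlam s hs0 hs1 g
      ((g 0)⁻¹) hinv
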